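/- An asymmetric delta lens (f, φ) : A ⇌ B can be represented as a commutative triangle of functors φ : Λ → A, φ̄ : Λ → B with f ∘ φ = φ̄, where φ is identity-on-objects and φ̄ is a discrete opfibration. Conversely, any such commutative triangle with φ identity-on-objects and φ̄ a discrete opfibration determines a lens (f, φ) : A ⇌ B. -/

import Mathlib

open CategoryTheory

universe w v u v₁ u₁ v₂ u₂ v₃ u₃

section Helpers

/-- The hom-type of a category structure, given explicitly. -/
def homOf {C : Type u₁} (cc : Category.{v₁} C) (x y : C) : Type v₁ :=
  @Quiver.Hom C cc.toCategoryStruct.toQuiver x y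

/-- Object part of a functor, with explicit category structures. -/
def objOf {C : Type u₁} {D : Type u₂} (cc : Category.{v₁} C) (cd : Category.{v₂} D)
    (F : @Functor C cc D cd) : C → D := F.obj

/-- Morphism part of a functor, with explicit category structures. -/
def mapOf {C : Type u₁} {D : Type u₂} (cc : Category.{v₁} C) (cd : Category.{v₂} D)
    (F : @Functor C cc D cd) {x y : C} (u : homOf cc x y) :
    homOf cd (objOf cc cd F x) (objOf cc cd F y) := F.map u

/-- Discrete opfibration: every morphism out of the image of an object has a unique
lift with that source. -/
def IsDiscreteOpfibration {X : Type u₁} {Y : Type u₂} (cx : Category.{v₁} X)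
    (cy : Category.{v₂} Y) (F : @Functor X cx Y cy) : Prop :=
  ∀ (x : X) (y : Y) (u : homOf cy (objOf cx cy F x) y),
    ∃! t : (Σ x' : X, homOf cx x x'),
      objOf cx cy F t.1 = y ∧ HEq (mapOf cx cy F t.2) u

/-- Fully faithful, as a property. -/
def IsFullyFaithfulP {X : Type u₁} {Y : Type u₂} (cx : Category.{v₁} X)
    (cy : Category.{v₂} Y) (F : @Functor X cx Y cy) : Prop :=
  ∀ (x x' : X) (u : homOf cy (objOf cx cy F x) (objOf cx cy F x')),
    ∃! w : homOf cx x x', mapOf cx cy F w = u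

end Helpers
/-- An asymmetric delta lens `A ⇌ B`: a Get functor together with a Put operation
lifting morphisms of `B` out of `get.obj a` to morphisms of `A` out of `a`, satisfying
the PutGet, GetPut and PutPut laws. -/
structure Lens (A : Type u₁) (B : Type u₂) [Category.{v₁} A] [Category.{v₂} B] where
  get : A ⥤ B
  tgt : ∀ (a : A) {b : B}, (get.obj a ⟶ b) → A
  put : ∀ (a : A) {b : B} (u : get.obj a ⟶ b), a ⟶ tgt a u
  obj_tgt : ∀ (a : A) {b : B} (u : get.obj a ⟶ b), get.obj (tgt a u) = b
  putget : ∀ (a : A) {b : B} (u : get.obj a ⟶ b), HEq (get.map (put a u)) u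
  tgt_id : ∀ a : A, tgt a (𝟙 (get.obj a)) = a
  getput : ∀ a : A, HEq (put a (𝟙 (get.obj a))) (𝟙 a)
  tgt_comp : ∀ (a : A) {b c : B} (u : get.obj a ⟶ b) (v : b ⟶ c)
    (v' : get.obj (tgt a u) ⟶ c), HEq v' v → tgt a (u ≫ v) = tgt (tgt a u) v'
  putput : ∀ (a : A) {b c : B} (u : get.obj a ⟶ b) (v : b ⟶ c)
    (v' : get.obj (tgt a u) ⟶ c), HEq v' v →
    HEq (put a (u ≫ v)) (put a u ≫ put (tgt a u) v')

section LensRep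

lemma comp_heq_comp {C : Type u₃} [Category.{v₃} C] {x y y' z z' : C} (hy : y = y') (hz : z = z')
    {f : x ⟶ y} {f' : x ⟶ y'} {g : y ⟶ z} {g' : y' ⟶ z'}
    (hf : HEq f f') (hg : HEq g g') : HEq (f ≫ g) (f' ≫ g') := by
  subst hy; subst hz; rw [eq_of_heq hf, eq_of_heq hg]

variable {A B : Type u} [ca : Category.{v} A] [cb : Category.{v} B]

namespace Lens
variable (l : Lens A B)

lemma tgt_comp' (a : A) {b c : B} (u : l.get.obj a ⟶ b) (v : b ⟶ c) :
    l.tgt a (u ≫ v) = l.tgt (l.tgt a u) (eqToHom (l.obj_tgt a u) ≫ v) :=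
  l.tgt_comp a u v _ (eqToHom_comp_heq _ _)

lemma putput' (a : A) {b c : B} (u : l.get.obj a ⟶ b) (v : b ⟶ c) :
    HEq (l.put a (u ≫ v)) (l.put a u ≫ l.put (l.tgt a u) (eqToHom (l.obj_tgt a u) ≫ v)) :=
  l.putput a u v _ (eqToHom_comp_heq _ _)

lemma tgt_eq {x y : A} (h : x = y) (h2 : l.get.obj x = l.get.obj y) {b : B}
    (v : l.get.obj y ⟶ b) : l.tgt x (eqToHom h2 ≫ v) = l.tgt y v := by
  subst h; rw [eqToHom_refl, Category.id_comp]

lemma put_eq {x y : A} (h : x = y) (h2 : l.get.obj x = l.get.obj y) {b : B}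
    (v : l.get.obj y ⟶ b) : HEq (l.put x (eqToHom h2 ≫ v)) (l.put y v) := by
  subst h; rw [eqToHom_refl, Category.id_comp]

lemma tgt_eqToHom {x : A} {b : B} (h : l.get.obj x = b) : l.tgt x (eqToHom h) = x := by
  subst h; rw [eqToHom_refl]; exact l.tgt_id x

lemma put_eqToHom {x : A} {b : B} (h : l.get.obj x = b) : HEq (l.put x (eqToHom h)) (𝟙 x) := by
  subst h; rw [eqToHom_refl]; exact l.getput x

lemma tgt_comp_eqToHom (a : A) {b c : B} (u : l.get.obj a ⟶ b) (e : b = c) :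
    l.tgt a (u ≫ eqToHom e) = l.tgt a u := by
  rw [l.tgt_comp', eqToHom_trans, l.tgt_eqToHom]

end Lens

/-- Morphisms of the category Λ. -/
structure LamHom (l : Lens A B) (a a' : A) : Type max u v where
  hom : l.get.obj a ⟶ l.get.obj a'
  cond : l.tgt a hom = a'

lemma LamHom.ext' {l : Lens A B} {a a' : A} {m m' : LamHom l a a'} (h : m.hom = m'.hom) :
    m = m' := by cases m; cases m'; cases h; rfl

lemma LamHom.heq {l : Lens A B} {a a' a'' : A} (h : a' = a'') {m : LamHom l a a'}
    {m' : LamHom l a a''} (hh : HEq m.hom m'.hom) : HEq m m' := by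
  subst h; exact heq_of_eq (LamHom.ext' (eq_of_heq hh))

/-- Type synonym carrying the category Λ. -/
def Lam (l : Lens A B) := A

/-- The category Λ. -/
instance lamCat (l : Lens A B) : Category.{max u v} (Lam l) where
  Hom a a' := LamHom l a a'
  id a := ⟨𝟙 _, l.tgt_id a⟩
  comp {a a' a''} m n :=
    ⟨m.hom ≫ n.hom,
      (l.tgt_comp' a m.hom n.hom).trans
        ((l.tgt_eq m.cond (l.obj_tgt a m.hom) n.hom).trans n.cond)⟩
  id_comp m := LamHom.ext' (by simp)
  comp_id m := LamHom.ext' (by simp)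
  assoc m n o := LamHom.ext' (by simp)

/-- The functor φ : Λ → A. -/
def pFun (l : Lens A B) : Lam l ⥤ A where
  obj a := a
  map {a a'} m := l.put a m.hom ≫ eqToHom m.cond
  map_id a := eq_of_heq ((comp_eqToHom_heq _ _).trans (l.getput a))
  map_comp {a a' a''} m n := by
    apply eq_of_heq
    refine (comp_eqToHom_heq _ _).trans ((l.putput' a m.hom n.hom).trans ?_)
    exact comp_heq_comp m.cond
      ((l.tgt_eq m.cond (l.obj_tgt a m.hom) n.hom).trans n.cond)
      (comp_eqToHom_heq _ _).symm
      ((l.put_eq m.cond (l.obj_tgt a m.hom) n.hom).trans (comp_eqToHom_heq _ _).symm)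

/-- The functor φ̄ : Λ → B. -/
def gbarFun (l : Lens A B) : Lam l ⥤ B where
  obj a := l.get.obj a
  map m := m.hom
  map_id _ := rfl
  map_comp _ _ := rfl

lemma triangle (l : Lens A B) : pFun l ⋙ l.get = gbarFun l := by
  refine CategoryTheory.Functor.ext (fun a => rfl) (fun a a' m => ?_)
  show l.get.map (l.put a m.hom ≫ eqToHom m.cond) = _
  apply eq_of_heq
  refine HEq.trans ?_ ((l.putget a m.hom).trans ?_)
  · erw [Functor.map_comp, eqToHom_map]
    exact comp_eqToHom_heq _ _
  · exact ((eqToHom_comp_heq _ _).trans (comp_eqToHom_heq _ _)).symm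


lemma gbar_opf (l : Lens A B) :
    IsDiscreteOpfibration (lamCat l) cb (gbarFun l) := by
  intro x y u
  simp only [IsDiscreteOpfibration, homOf, objOf, mapOf] at *
  refine ⟨⟨l.tgt x u, ⟨u ≫ eqToHom (l.obj_tgt x u).symm, l.tgt_comp_eqToHom x u _⟩⟩,
    ⟨l.obj_tgt x u, comp_eqToHom_heq _ _⟩, ?_⟩
  rintro ⟨x', m⟩ ⟨h1, h2⟩
  have hm : m.hom = u ≫ eqToHom h1.symm :=
    eq_of_heq (h2.trans (comp_eqToHom_heq u h1.symm).symm)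
  have hx : x' = l.tgt x u := by rw [← m.cond, hm]; exact l.tgt_comp_eqToHom _ _ _
  subst hx
  exact congrArg (Sigma.mk (l.tgt x u)) (LamHom.ext' (by rw [hm]; rfl))

end LensRep

section Back
variable {A B : Type u}

lemma id_heq_eqToHom {C : Type u₃} [Category.{v₃} C] {X Y : C} (h : X = Y) :
    HEq (𝟙 X) (eqToHom h) := by subst h; simp

section Back
variable {A B : Type u}

/-- put0 : the Put candidate in the backward direction. -/
def put0 (cΛ : Category.{w} A) [ca : Category.{v} A] (p : @Functor A cΛ A ca)
    (hp : ∀ a : A, objOf cΛ ca p a = a) {x x' : A} (w : homOf cΛ x x') : x ⟶ x' :=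
  eqToHom (hp x).symm ≫ mapOf cΛ ca p w ≫ eqToHom (hp x')

lemma put0_id (cΛ : Category.{w} A) [ca : Category.{v} A] (p : @Functor A cΛ A ca)
    (hp : ∀ a : A, objOf cΛ ca p a = a) (x : A) :
    put0 cΛ p hp (@CategoryStruct.id A cΛ.toCategoryStruct x) = 𝟙 x := by
  unfold put0 mapOf
  rw [@CategoryTheory.Functor.map_id A cΛ A ca p x]
  unfold objOf
  simp
  exact (eqToHom_trans _ _).trans (eqToHom_refl _ _)

lemma put0_comp (cΛ : Category.{w} A) [ca : Category.{v} A] (p : @Functor A cΛ A ca)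
    (hp : ∀ a : A, objOf cΛ ca p a = a) {x y z : A}
    (w1 : homOf cΛ x y) (w2 : homOf cΛ y z) :
    put0 cΛ p hp (@CategoryStruct.comp A cΛ.toCategoryStruct x y z w1 w2) =
      put0 cΛ p hp w1 ≫ put0 cΛ p hp w2 := by
  unfold put0 mapOf
  rw [@CategoryTheory.Functor.map_comp A cΛ A ca p x y z w1 w2]
  unfold objOf
  simp
  erw [eqToHom_trans_assoc, eqToHom_refl, Category.id_comp]

lemma put0_heq (cΛ : Category.{w} A) [ca : Category.{v} A] [cb : Category.{v} B]
    (f : A ⥤ B) (p : @Functor A cΛ A ca) (gbar : @Functor A cΛ B cb)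
    (hp : ∀ a : A, objOf cΛ ca p a = a)
    (hcomp : @Functor.comp A cΛ A ca B cb p f = gbar) {x x' : A} (w : homOf cΛ x x') :
    HEq (f.map (put0 cΛ p hp w)) (mapOf cΛ cb gbar w) := by
  unfold put0 mapOf
  rw [@CategoryTheory.Functor.congr_hom A cΛ B cb _ _ hcomp.symm x x' w]
  simp only [Functor.map_comp, eqToHom_map, Functor.comp_map]
  erw [Functor.map_comp, eqToHom_map]
  exact ((eqToHom_comp_heq _ _).trans (comp_eqToHom_heq _ _)).trans
    (((eqToHom_comp_heq _ _).trans (comp_eqToHom_heq _ _)).symm)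

lemma backward (cΛ : Category.{w} A) [ca : Category.{v} A] [cb : Category.{v} B]
    (f : A ⥤ B) (p : @Functor A cΛ A ca) (gbar : @Functor A cΛ B cb)
    (hp : ∀ a : A, objOf cΛ ca p a = a)
    (hopf : IsDiscreteOpfibration cΛ cb gbar)
    (hcomp : @Functor.comp A cΛ A ca B cb p f = gbar) :
    ∃ l : @Lens A B ca cb, l.get = f := by
  have hg : ∀ a : A, objOf cΛ cb gbar a = f.obj a := by
    intro a; rw [← hcomp]; exact congrArg f.obj (hp a)
  have hopf2 : ∀ (x : A) (y : B) (uu : homOf cb (objOf cΛ cb gbar x) y),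
      ∃! t : (Σ x' : A, homOf cΛ x x'),
        objOf cΛ cb gbar t.1 = y ∧ HEq (mapOf cΛ cb gbar t.2) uu := hopf
  let T : ∀ (a : A) (b : B), (f.obj a ⟶ b) → Σ x' : A, homOf cΛ a x' :=
    fun a b u => (hopf2 a b (eqToHom (hg a) ≫ u)).choose
  have hT : ∀ (a : A) (b : B) (u : f.obj a ⟶ b),
      objOf cΛ cb gbar (T a b u).1 = b ∧
        HEq (mapOf cΛ cb gbar (T a b u).2) (eqToHom (hg a) ≫ u) :=
    fun a b u => (hopf2 a b (eqToHom (hg a) ≫ u)).choose_spec.1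
  have hU : ∀ (a : A) (b : B) (u : f.obj a ⟶ b) (t : Σ x' : A, homOf cΛ a x'),
      (objOf cΛ cb gbar t.1 = b ∧ HEq (mapOf cΛ cb gbar t.2) (eqToHom (hg a) ≫ u)) →
      t = T a b u :=
    fun a b u t h => (hopf2 a b (eqToHom (hg a) ≫ u)).choose_spec.2 t h
  -- the lift of the identity is the identity
  have e1 : ∀ a : A,
      (⟨a, @CategoryStruct.id A cΛ.toCategoryStruct a⟩ : Σ x' : A, homOf cΛ a x') =
        T a (f.obj a) (𝟙 (f.obj a)) := by
    intro a
    refine hU a _ _ _ ⟨hg a, ?_⟩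
    show HEq (mapOf cΛ cb gbar (@CategoryStruct.id A cΛ.toCategoryStruct a)) _
    have : mapOf cΛ cb gbar (@CategoryStruct.id A cΛ.toCategoryStruct a)
        = @CategoryStruct.id B cb.toCategoryStruct (objOf cΛ cb gbar a) :=
      @CategoryTheory.Functor.map_id A cΛ B cb gbar a
    rw [this, Category.comp_id]
    exact id_heq_eqToHom (hg a)
  -- the lift of a composite is the composite of lifts
  have e2 : ∀ (a : A) (b c : B) (u : f.obj a ⟶ b) (v : b ⟶ c)
      (v' : f.obj (T a b u).1 ⟶ c), HEq v' v →
      (⟨(T (T a b u).1 c v').1,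
        @CategoryStruct.comp A cΛ.toCategoryStruct a (T a b u).1 (T (T a b u).1 c v').1
          (T a b u).2 (T (T a b u).1 c v').2⟩ : Σ x' : A, homOf cΛ a x') =
        T a c (u ≫ v) := by
    intro a b c u v v' hv
    refine hU a c (u ≫ v) _ ⟨(hT (T a b u).1 c v').1, ?_⟩
    have hmc : mapOf cΛ cb gbar
        (@CategoryStruct.comp A cΛ.toCategoryStruct a (T a b u).1 (T (T a b u).1 c v').1
          (T a b u).2 (T (T a b u).1 c v').2)
        = mapOf cΛ cb gbar (T a b u).2 ≫ mapOf cΛ cb gbar (T (T a b u).1 c v').2 :=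
      @CategoryTheory.Functor.map_comp A cΛ B cb gbar _ _ _ (T a b u).2 (T (T a b u).1 c v').2
    show HEq (mapOf cΛ cb gbar _) _
    rw [hmc]
    refine HEq.trans (comp_heq_comp (hT a b u).1 (hT (T a b u).1 c v').1 (hT a b u).2
      (((hT (T a b u).1 c v').2).trans ((eqToHom_comp_heq _ _).trans hv))) ?_
    exact heq_of_eq (Category.assoc _ _ _)
  refine ⟨{ get := f
            tgt := fun a {b} u => (T a b u).1
            put := fun a {b} u => put0 cΛ p hp (T a b u).2
            obj_tgt := fun a {b} u => (hg _).symm.trans (hT a b u).1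
            putget := fun a {b} u => (put0_heq cΛ f p gbar hp hcomp _).trans
              ((hT a b u).2.trans (eqToHom_comp_heq _ _))
            tgt_id := fun a => (congrArg Sigma.fst (e1 a)).symm
            getput := ?_
            tgt_comp := ?_
            putput := ?_ }, rfl⟩
  · intro a
    have h2 : HEq (put0 cΛ p hp (@CategoryStruct.id A cΛ.toCategoryStruct a))
        (put0 cΛ p hp (T a (f.obj a) (𝟙 (f.obj a))).2) := by
      rw [← e1 a]
    exact h2.symm.trans (heq_of_eq (put0_id cΛ p hp a))
  · intro a b c u v v' hv
    exact (congrArg Sigma.fst (e2 a b c u v v' hv)).symm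
  · intro a b c u v v' hv
    have h3 : HEq (put0 cΛ p hp
        (@CategoryStruct.comp A cΛ.toCategoryStruct a (T a b u).1 (T (T a b u).1 c v').1
          (T a b u).2 (T (T a b u).1 c v').2))
        (put0 cΛ p hp (T a c (u ≫ v)).2) := by
      rw [← e2 a b c u v v' hv]
    exact h3.symm.trans (heq_of_eq (put0_comp cΛ p hp _ _))

end Back

/-- A lens `(f, φ) : A ⇌ B` is the same thing as a commutative triangle
`φ̄ = f ∘ φ : Λ → B` where `φ : Λ → A` is identity-on-objects and `φ̄ : Λ → B` is a
discrete opfibration.  Forwards: every lens yields such a triangle (with `Λ` a category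
structure on the objects of `A`, and `φ̄` acting as `f` on objects).  Backwards: every
such triangle (over any category structure `cΛ` on the objects of `A`) determines a
lens with Get `f`. -/
theorem lens_representation {A B : Type u} [ca : Category.{v} A] [cb : Category.{v} B] :
    (∀ l : Lens A B,
      ∃ (cΛ : Category.{max u v} A) (p : @Functor A cΛ A ca) (gbar : @Functor A cΛ B cb),
        (∀ a : A, objOf cΛ ca p a = a) ∧
        IsDiscreteOpfibration cΛ cb gbar ∧
        @Functor.comp A cΛ A ca B cb p l.get = gbar) ∧
    (∀ (f : A ⥤ B) (cΛ : Category.{w} A) (p : @Functor A cΛ A ca)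
        (gbar : @Functor A cΛ B cb),
        (∀ a : A, objOf cΛ ca p a = a) →
        IsDiscreteOpfibration cΛ cb gbar →
        @Functor.comp A cΛ A ca B cb p f = gbar →
        ∃ l : @Lens A B ca cb, @Lens.get A B ca cb l = f) := by

  constructor
  · intro l
    exact ⟨lamCat l, pFun l, gbarFun l, fun _ => rfl, gbar_opf l, triangle l⟩
  · intro f cΛ p gbar hp hopf hcomp
    exact backward cΛ f p gbar hp hopf hcomp
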